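/- Let X, E be finite-dimensional Banach spaces, (Y,Σ,μ) a measure space, and K : X × Y → B(E) satisfy (Car1)–(Car4) and (K1). Then the Fredholm operator T : L^∞(Y,E) → BC(X,E), (Tf)(x) = ∫_Y K(x,y) f(y) dμ(y), is a compact linear operator. -/

import Mathlib

open MeasureTheory BoundedContinuousFunction

/-- Under (Car1)–(Car4) and (K1), the Fredholm operator
`(Tf)(x) = ∫ K x y (f y) dμ` from `L^∞(Y,E)` to `BC(X,E)` is linear and compact:
it is additive/homogeneous, and the image of the unit ball of `L^∞` is relatively
compact in `BC(X,E)`. -/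
theorem fredholm_operator_compact
    {X E Y : Type*} [NormedAddCommGroup X] [NormedSpace ℝ X] [FiniteDimensional ℝ X]
    [NormedAddCommGroup E] [NormedSpace ℝ E] [FiniteDimensional ℝ E]
    [MeasurableSpace Y] (μ : Measure Y)
    (K : X → Y → E →L[ℝ] E)
    (hCar1 : ∀ x : X, StronglyMeasurable (K x))
    (hCar2 : ∀ᵐ y ∂μ, Continuous fun x : X => K x y)
    (hCar3 : ∀ x : X, ∃ U ∈ nhds x, ∃ D : Y → ℝ, Integrable D μ ∧
      ∀ z ∈ U, ∀ᵐ y ∂μ, ‖K z y‖ ≤ D y)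
    (hCar4 : ∃ C : ℝ, ∀ x : X, ∫ y, ‖K x y‖ ∂μ ≤ C)
    (hK1 : ∀ ε > (0 : ℝ), ∃ Tsup : ℝ, ∀ v : X, ‖v‖ = 1 →
      ∃ Tv : ℝ, 0 < Tv ∧ Tv ≤ Tsup ∧ ∃ L : Y → E →L[ℝ] E, Integrable L μ ∧
        ∀ t : ℝ, Tv ≤ t → ∫ y, ‖K (t • v) y - L y‖ ∂μ ≤ ε) :
    -- linearity
    (∀ (a b : ℝ) (f g : Y → E), MemLp f ⊤ μ → MemLp g ⊤ μ →
      (fun x : X => ∫ y, K x y (a • f y + b • g y) ∂μ) =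
        fun x : X => a • ∫ y, K x y (f y) ∂μ + b • ∫ y, K x y (g y) ∂μ) ∧
    -- compactness: image of the unit ball of L^∞ is relatively compact in BC(X,E)
    IsCompact (closure {g : X →ᵇ E | ∃ f : Y → E, MemLp f ⊤ μ ∧
      eLpNorm f ⊤ μ ≤ 1 ∧ ∀ x : X, g x = ∫ y, K x y (f y) ∂μ}) := by
  classical
  -- the norm of the kernel is integrable at every point
  have hIntNorm : ∀ x : X, Integrable (fun y => ‖K x y‖) μ := by
    intro x
    obtain ⟨U, hU, D, hD, hbd⟩ := hCar3 x
    refine Integrable.mono' hD ((hCar1 x).norm.aestronglyMeasurable) ?_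
    filter_upwards [hbd x (mem_of_mem_nhds hU)] with y hy
    simpa using hy
  -- a.e. bound from `Memℒp ⊤`
  have hbdM : ∀ (f : Y → E), MemLp f ⊤ μ →
      ∀ᵐ y ∂μ, ‖f y‖ ≤ (eLpNorm f ⊤ μ).toReal := by
    intro f hf
    filter_upwards [ae_le_eLpNormEssSup (f := f) (μ := μ)] with y hy
    rw [eLpNorm_exponent_top]
    have h2 : eLpNormEssSup f μ ≠ ⊤ := by
      rw [← eLpNorm_exponent_top]; exact hf.eLpNorm_ne_top
    calc ‖f y‖ = ((‖f y‖₊ : ENNReal)).toReal := by simp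
      _ ≤ (eLpNormEssSup f μ).toReal := ENNReal.toReal_mono h2 hy
  -- integrability of the applied kernel
  have hIntAppl : ∀ (x : X) (f : Y → E) (M : ℝ), AEStronglyMeasurable f μ →
      (∀ᵐ y ∂μ, ‖f y‖ ≤ M) → Integrable (fun y => K x y (f y)) μ := by
    intro x f M hfm hfb
    refine Integrable.mono' ((hIntNorm x).mul_const M) ?_ ?_
    · exact isBoundedBilinearMap_apply.continuous.comp_aestronglyMeasurable
        ((hCar1 x).aestronglyMeasurable.prodMk hfm)
    · filter_upwards [hfb] with y hy
      exact (ContinuousLinearMap.le_opNorm _ _).trans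
        (mul_le_mul_of_nonneg_left hy (norm_nonneg _))
  -- integrability of norms of differences
  have hSubInt : ∀ (A B : Y → E →L[ℝ] E), AEStronglyMeasurable A μ →
      AEStronglyMeasurable B μ → Integrable (fun y => ‖A y‖) μ →
      Integrable (fun y => ‖B y‖) μ → Integrable (fun y => ‖A y - B y‖) μ := by
    intro A B mA mB iA iB
    refine Integrable.mono' (iA.add iB) ((mA.sub mB).norm) (Filter.Eventually.of_forall fun y => ?_)
    rw [Real.norm_eq_abs, abs_norm]
    exact norm_sub_le _ _
  obtain ⟨C, hC⟩ := hCar4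
  -- uniform bound of the image functions
  have hgb : ∀ (f : Y → E), (∀ᵐ y ∂μ, ‖f y‖ ≤ 1) →
      ∀ x : X, ‖∫ y, K x y (f y) ∂μ‖ ≤ C := by
    intro f h1 x
    refine (norm_integral_le_of_norm_le (hIntNorm x) ?_).trans (hC x)
    filter_upwards [h1] with y hy
    exact (ContinuousLinearMap.le_opNorm _ _).trans
      (mul_le_of_le_one_right (norm_nonneg _) hy)
  -- key estimate
  have hEst : ∀ (f : Y → E), AEStronglyMeasurable f μ → (∀ᵐ y ∂μ, ‖f y‖ ≤ 1) →
      ∀ x x' : X, ‖(∫ y, K x y (f y) ∂μ) - ∫ y, K x' y (f y) ∂μ‖ ≤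
        ∫ y, ‖K x y - K x' y‖ ∂μ := by
    intro f hfm hf1 x x'
    rw [← integral_sub (hIntAppl x f 1 hfm hf1) (hIntAppl x' f 1 hfm hf1)]
    refine norm_integral_le_of_norm_le (hSubInt _ _ (hCar1 x).aestronglyMeasurable
      (hCar1 x').aestronglyMeasurable (hIntNorm x) (hIntNorm x')) ?_
    filter_upwards [hf1] with y hy
    calc ‖K x y (f y) - K x' y (f y)‖ = ‖(K x y - K x' y) (f y)‖ := by
          simp [ContinuousLinearMap.sub_apply]
      _ ≤ ‖K x y - K x' y‖ * ‖f y‖ := ContinuousLinearMap.le_opNorm _ _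
      _ ≤ ‖K x y - K x' y‖ * 1 := mul_le_mul_of_nonneg_left hy (norm_nonneg _)
      _ = _ := mul_one _
  -- triangle inequality through an intermediate kernel
  have hTriangle : ∀ (x x' : X) (L : Y → E →L[ℝ] E), Integrable L μ →
      ∫ y, ‖K x y - K x' y‖ ∂μ ≤
        (∫ y, ‖K x y - L y‖ ∂μ) + ∫ y, ‖L y - K x' y‖ ∂μ := by
    intro x x' L hL
    have i1 : Integrable (fun y => ‖K x y - L y‖) μ :=
      hSubInt _ _ (hCar1 x).aestronglyMeasurable hL.aestronglyMeasurable (hIntNorm x) hL.norm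
    have i2 : Integrable (fun y => ‖L y - K x' y‖) μ :=
      hSubInt _ _ hL.aestronglyMeasurable (hCar1 x').aestronglyMeasurable hL.norm (hIntNorm x')
    rw [← integral_add i1 i2]
    refine integral_mono (hSubInt _ _ (hCar1 x).aestronglyMeasurable
      (hCar1 x').aestronglyMeasurable (hIntNorm x) (hIntNorm x')) (i1.add i2) fun y => ?_
    calc ‖K x y - K x' y‖ = ‖(K x y - L y) + (L y - K x' y)‖ := by abel_nf
      _ ≤ ‖K x y - L y‖ + ‖L y - K x' y‖ := norm_add_le _ _
  -- equicontinuity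
  have hEquicont : ∀ x₀ : X, ∀ ε > (0 : ℝ), ∃ δ > (0 : ℝ), ∀ x' : X,
      dist x' x₀ < δ → ∫ y, ‖K x' y - K x₀ y‖ ∂μ ≤ ε := by
    intro x₀ ε hε
    obtain ⟨U, hU, D, hD, hbd⟩ := hCar3 x₀
    have htend : Filter.Tendsto (fun x => ∫ y, ‖K x y - K x₀ y‖ ∂μ) (nhds x₀)
        (nhds (∫ _y, (0 : ℝ) ∂μ)) := by
      apply tendsto_integral_filter_of_dominated_convergence (fun y => D y + ‖K x₀ y‖)
      · exact Filter.Eventually.of_forall fun x =>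
          (((hCar1 x).sub (hCar1 x₀)).norm).aestronglyMeasurable
      · filter_upwards [hU] with x hx
        filter_upwards [hbd x hx] with y hy
        rw [Real.norm_eq_abs, abs_norm]
        exact (norm_sub_le _ _).trans (add_le_add hy le_rfl)
      · exact hD.add (hIntNorm x₀)
      · filter_upwards [hCar2] with y hy
        have hc : Continuous fun x : X => ‖K x y - K x₀ y‖ :=
          (hy.sub continuous_const).norm
        have h := hc.tendsto x₀
        simpa using h
    rw [integral_zero] at htend
    have h2 := Metric.tendsto_nhds.mp htend ε hε
    obtain ⟨δ, hδ0, hδ⟩ := Metric.eventually_nhds_iff.mp h2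
    refine ⟨δ, hδ0, fun x' hx' => ?_⟩
    have := hδ hx'
    rw [Real.dist_eq, sub_zero] at this
    exact ((le_abs_self _).trans_lt this).le
  constructor
  · -- linearity
    intro a b f g hf hg
    funext x
    have i1 : Integrable (fun y => K x y (f y)) μ :=
      hIntAppl x f _ hf.aestronglyMeasurable (hbdM f hf)
    have i2 : Integrable (fun y => K x y (g y)) μ :=
      hIntAppl x g _ hg.aestronglyMeasurable (hbdM g hg)
    simp only [map_add, ContinuousLinearMap.map_smul]
    have i1' : Integrable (fun y => a • (K x y) (f y)) μ := i1.smul a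
    have i2' : Integrable (fun y => b • (K x y) (g y)) μ := i2.smul b
    rw [integral_add i1' i2', integral_smul, integral_smul]
  · -- compactness
    set S : Set (X →ᵇ E) := {g : X →ᵇ E | ∃ f : Y → E, MemLp f ⊤ μ ∧
      eLpNorm f ⊤ μ ≤ 1 ∧ ∀ x : X, g x = ∫ y, K x y (f y) ∂μ} with hS_def
    have hae1 : ∀ (f : Y → E), MemLp f ⊤ μ → eLpNorm f ⊤ μ ≤ 1 →
        ∀ᵐ y ∂μ, ‖f y‖ ≤ 1 := by
      intro f hf h1
      filter_upwards [hbdM f hf] with y hy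
      refine hy.trans ?_
      calc (eLpNorm f ⊤ μ).toReal ≤ (1 : ENNReal).toReal :=
            ENNReal.toReal_mono (by simp) h1
        _ = 1 := by simp
    refine TotallyBounded.isCompact_of_isClosed (TotallyBounded.closure ?_) isClosed_closure
    rw [Metric.totallyBounded_iff]
    intro ε' hε'
    set ε : ℝ := ε' / 9 with hε_def
    have hε : 0 < ε := by positivity
    obtain ⟨Tsup, hT⟩ := hK1 ε hε
    set R : ℝ := max Tsup 1 with hR_def
    have hR1 : (1 : ℝ) ≤ R := le_max_right _ _
    have hR0 : (0 : ℝ) < R := lt_of_lt_of_le one_pos hR1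
    -- radial estimate
    have hrad : ∀ (f : Y → E), AEStronglyMeasurable f μ → (∀ᵐ y ∂μ, ‖f y‖ ≤ 1) →
        ∀ x : X, R < ‖x‖ →
        ‖(∫ y, K x y (f y) ∂μ) - ∫ y, K (R • (‖x‖⁻¹ • x)) y (f y) ∂μ‖ ≤ ε + ε := by
      intro f hfm hf1 x hx
      set v : X := ‖x‖⁻¹ • x with hv_def
      have hx0 : ‖x‖ ≠ 0 := by
        intro h; rw [h] at hx; exact absurd hx (not_lt.mpr hR0.le)
      have hv : ‖v‖ = 1 := by
        rw [hv_def, norm_smul, norm_inv, norm_norm, inv_mul_cancel₀ hx0]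
      obtain ⟨Tv, hTv0, hTvS, L, hL, hLest⟩ := hT v hv
      have hxv : (‖x‖ : ℝ) • v = x := by
        rw [hv_def, smul_smul, mul_inv_cancel₀ hx0, one_smul]
      have h1 : ∫ y, ‖K x y - L y‖ ∂μ ≤ ε := by
        rw [← hxv]
        exact hLest ‖x‖ (hTvS.trans ((le_max_left _ _).trans hx.le))
      have h2 : ∫ y, ‖L y - K (R • v) y‖ ∂μ ≤ ε := by
        have := hLest R (hTvS.trans (le_max_left _ _))
        simpa [norm_sub_rev] using this
      calc ‖(∫ y, K x y (f y) ∂μ) - ∫ y, K (R • v) y (f y) ∂μ‖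
          ≤ ∫ y, ‖K x y - K (R • v) y‖ ∂μ := hEst f hfm hf1 x (R • v)
        _ ≤ (∫ y, ‖K x y - L y‖ ∂μ) + ∫ y, ‖L y - K (R • v) y‖ ∂μ :=
            hTriangle x (R • v) L hL
        _ ≤ ε + ε := add_le_add h1 h2
    -- equicontinuity cover of the closed ball of radius R
    have hδε := fun x => hEquicont x ε hε
    choose δ hδpos hδ using hδε
    have hBcomp : IsCompact (Metric.closedBall (0 : X) R) := isCompact_closedBall _ _
    obtain ⟨t, -, htcov⟩ := hBcomp.elim_nhds_subcover (fun x => Metric.ball x (δ x))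
      (fun x _ => Metric.ball_mem_nhds x (hδpos x))
    -- finite net in the ball of radius `max C 0` in `E`
    set C' : ℝ := max C 0 with hC'_def
    have hEcomp : IsCompact (Metric.closedBall (0 : E) C') := isCompact_closedBall _ _
    obtain ⟨N, hNfin, hNcov⟩ := Metric.totallyBounded_iff.mp hEcomp.totallyBounded ε hε
    haveI : Fintype ↑N := hNfin.fintype
    -- cells and representatives
    set cell : (↑(↑t : Set X) → ↑N) → Set (X →ᵇ E) := fun φ =>
      {g : X →ᵇ E | g ∈ S ∧ ∀ i : ↑(↑t : Set X), dist (g (i : X)) ((φ i : E)) < ε}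
      with hcell_def
    set rep : (↑(↑t : Set X) → ↑N) → (X →ᵇ E) := fun φ =>
      if h : (cell φ).Nonempty then h.choose else 0 with hrep_def
    have hrepmem : ∀ φ, (cell φ).Nonempty → rep φ ∈ cell φ := by
      intro φ h
      rw [hrep_def]
      simp only [dif_pos h]
      exact h.choose_spec
    -- cell diameter bound
    have hdiam : ∀ φ (g₁ g₂ : X →ᵇ E), g₁ ∈ cell φ → g₂ ∈ cell φ →
        dist g₁ g₂ ≤ 8 * ε := by
      rintro φ g₁ g₂ ⟨⟨f₁, hf₁, h1₁, hx₁⟩, hn₁⟩ ⟨⟨f₂, hf₂, h1₂, hx₂⟩, hn₂⟩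
      have hae₁ : ∀ᵐ y ∂μ, ‖f₁ y‖ ≤ 1 := hae1 f₁ hf₁ h1₁
      have hae₂ : ∀ᵐ y ∂μ, ‖f₂ y‖ ≤ 1 := hae1 f₂ hf₂ h1₂
      rw [BoundedContinuousFunction.dist_le (by positivity)]
      have hball_case : ∀ x : X, ‖x‖ ≤ R → dist (g₁ x) (g₂ x) ≤ 4 * ε := by
        intro x hx
        have hxB : x ∈ Metric.closedBall (0 : X) R := by
          rwa [Metric.mem_closedBall, dist_zero_right]
        have hmem := htcov hxB
        rw [Set.mem_iUnion₂] at hmem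
        obtain ⟨i, hi, hib⟩ := hmem
        have hdist : dist x i < δ i := by rwa [Metric.mem_ball] at hib
        have e₁ : dist (g₁ x) (g₁ i) ≤ ε := by
          rw [dist_eq_norm, hx₁ x, hx₁ i]
          exact (hEst f₁ hf₁.aestronglyMeasurable hae₁ x i).trans (hδ i x hdist)
        have e₂ : dist (g₂ i) (g₂ x) ≤ ε := by
          rw [dist_comm, dist_eq_norm, hx₂ x, hx₂ i]
          exact (hEst f₂ hf₂.aestronglyMeasurable hae₂ x i).trans (hδ i x hdist)
        have e₃ : dist (g₁ i) ((φ ⟨i, hi⟩ : E)) < ε := hn₁ ⟨i, hi⟩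
        have e₄ : dist ((φ ⟨i, hi⟩ : E)) (g₂ i) < ε := by
          rw [dist_comm]; exact hn₂ ⟨i, hi⟩
        calc dist (g₁ x) (g₂ x)
            ≤ dist (g₁ x) (g₁ i) + dist (g₁ i) (g₂ i) + dist (g₂ i) (g₂ x) :=
              dist_triangle4 _ _ _ _
          _ ≤ ε + (ε + ε) + ε :=
              add_le_add (add_le_add e₁ ((dist_triangle _ ((φ ⟨i, hi⟩ : E)) _).trans
                (add_le_add e₃.le e₄.le))) e₂
          _ = 4 * ε := by ring
      intro x
      by_cases hx : ‖x‖ ≤ R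
      · exact (hball_case x hx).trans (by linarith)
      · push_neg at hx
        set x' : X := R • (‖x‖⁻¹ • x) with hx'_def
        have hx'R : ‖x'‖ ≤ R := by
          have hx0 : ‖x‖ ≠ 0 := (hR0.trans hx).ne'
          rw [hx'_def, norm_smul, norm_smul, norm_inv, norm_norm,
            inv_mul_cancel₀ hx0, mul_one, Real.norm_eq_abs, abs_of_pos hR0]
        have r₁ : dist (g₁ x) (g₁ x') ≤ ε + ε := by
          rw [dist_eq_norm, hx₁ x, hx₁ x']
          exact hrad f₁ hf₁.aestronglyMeasurable hae₁ x hx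
        have r₂ : dist (g₂ x') (g₂ x) ≤ ε + ε := by
          rw [dist_comm, dist_eq_norm, hx₂ x, hx₂ x']
          exact hrad f₂ hf₂.aestronglyMeasurable hae₂ x hx
        calc dist (g₁ x) (g₂ x)
            ≤ dist (g₁ x) (g₁ x') + dist (g₁ x') (g₂ x') + dist (g₂ x') (g₂ x) :=
              dist_triangle4 _ _ _ _
          _ ≤ (ε + ε) + 4 * ε + (ε + ε) :=
              add_le_add (add_le_add r₁ (hball_case x' hx'R)) r₂
          _ = 8 * ε := by ring
    refine ⟨Set.range rep, Set.finite_range rep, ?_⟩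
    intro g hg
    obtain ⟨f, hf, hf1, hgx⟩ := hg
    have haef : ∀ᵐ y ∂μ, ‖f y‖ ≤ 1 := hae1 f hf hf1
    have hchoose : ∀ i : ↑(↑t : Set X), ∃ b : ↑N, dist (g (i : X)) ((b : E)) < ε := by
      intro i
      have h1 : g (i : X) ∈ Metric.closedBall (0 : E) C' := by
        rw [Metric.mem_closedBall, dist_zero_right, hgx]
        exact (hgb f haef _).trans (le_max_left _ _)
      have h2 := hNcov h1
      rw [Set.mem_iUnion₂] at h2
      obtain ⟨b, hb, hbd⟩ := h2
      exact ⟨⟨b, hb⟩, by rwa [Metric.mem_ball] at hbd⟩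
    choose φ hφ using hchoose
    have hgcell : g ∈ cell φ := ⟨⟨f, hf, hf1, hgx⟩, hφ⟩
    have hne : (cell φ).Nonempty := ⟨g, hgcell⟩
    refine Set.mem_iUnion₂.mpr ⟨rep φ, ⟨φ, rfl⟩, ?_⟩
    rw [Metric.mem_ball]
    refine (hdiam φ g (rep φ) hgcell (hrepmem φ hne)).trans_lt ?_
    rw [hε_def]
    linarith
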